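/- Let S and T be rainbow independent sets in a coloured matroid (a matroid whose ground set elements are each assigned a colour; a set is rainbow if its elements have pairwise distinct colours). Then there exists a rainbow independent set S* with S ⊆ S* ⊆ S ∪ T and |T \ S*| ≤ 2·|S \ T|. -/

import Mathlib

open Set

/-- If `S` and `T` are rainbow independent sets in a coloured matroid,
then there is a rainbow independent set `S'` with `S ⊆ S' ⊆ S ∪ T` and
`|T \ S'| ≤ 2·|S \ T|`. -/
theorem stmt0 {α κ : Type*} (M : Matroid α) [M.Finite] (c : α → κ)
    (S T : Set α) (hS : M.Indep S) (hT : M.Indep T)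
    (hSr : Set.InjOn c S) (hTr : Set.InjOn c T) :
    ∃ S' : Set α, M.Indep S' ∧ Set.InjOn c S' ∧ S ⊆ S' ∧ S' ⊆ S ∪ T ∧
      (T \ S').ncard ≤ 2 * (S \ T).ncard := by
  classical
  have hE : M.E.Finite := M.ground_finite
  have hSE := hS.subset_ground
  have hTE := hT.subset_ground
  have hSf : S.Finite := hE.subset hSE
  have hTf : T.Finite := hE.subset hTE
  obtain ⟨B, hB, hSB⟩ := hS.subset_isBasis_of_subset (subset_union_left (s := S) (t := T))
    (union_subset hSE hTE)
  have hBsub : B ⊆ S ∪ T := hB.subset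
  have hBf : B.Finite := (hSf.union hTf).subset hBsub
  -- the set of "colour-conflicting" elements to remove
  set D : Set α := (B \ S) ∩ c ⁻¹' (c '' S) with hD
  refine ⟨B \ D, hB.indep.subset diff_subset, ?_, ?_, diff_subset.trans hBsub, ?_⟩
  · -- rainbow
    intro x hx y hy hxy
    have hxB := hx.1; have hyB := hy.1
    by_cases hxS : x ∈ S <;> by_cases hyS : y ∈ S
    · exact hSr hxS hyS hxy
    · exact absurd ⟨⟨hyB, hyS⟩, ⟨x, hxS, hxy⟩⟩ hy.2
    · exact absurd ⟨⟨hxB, hxS⟩, ⟨y, hyS, hxy.symm⟩⟩ hx.2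
    · exact hTr ((hBsub hxB).resolve_left hxS) ((hBsub hyB).resolve_left hyS) hxy
  · -- S ⊆ B \ D
    intro x hx
    exact ⟨hSB hx, fun h => h.1.2 hx⟩
  · -- cardinality bound
    have hsub : T \ (B \ D) ⊆ (T \ B) ∪ D := by
      intro x hx
      by_cases hxB : x ∈ B
      · right; by_contra hxD; exact hx.2 ⟨hxB, hxD⟩
      · left; exact ⟨hx.1, hxB⟩
    have hDf : D.Finite := hBf.subset (inter_subset_left.trans diff_subset)
    have hTBf : (T \ B).Finite := hTf.diff
    -- |T \ B| ≤ |S \ T|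
    obtain ⟨B', hB', hTB'⟩ := hT.subset_isBasis_of_subset (subset_union_right (s := S) (t := T))
      (union_subset hSE hTE)
    have hcard : T.encard ≤ B.encard := by
      rw [hB.encard_eq_encard hB']
      exact encard_le_encard hTB'
    have hcardn : T.ncard ≤ B.ncard := by
      have : B.encard ≠ ⊤ := hBf.encard_lt_top.ne
      exact ENat.toNat_le_toNat hcard this
    have h1 : (T \ B).ncard ≤ (B \ T).ncard :=
      (ncard_le_ncard_iff_ncard_diff_le_ncard_diff hTf hBf).mp hcardn
    have h1' : (B \ T).ncard ≤ (S \ T).ncard := by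
      apply ncard_le_ncard _ hSf.diff
      intro x hx
      exact ⟨(hBsub hx.1).resolve_right hx.2, hx.2⟩
    -- |D| ≤ |S \ T| via injection
    have h2 : D.ncard ≤ (S \ T).ncard := by
      have : ∀ x ∈ D, ∃ s ∈ S, c s = c x := fun x hx => hx.2
      choose f hfS hfc using this
      refine ncard_le_ncard_of_injOn (fun x => if h : x ∈ D then f x h else x) ?_ ?_ hSf.diff
      · intro x hx
        simp only [dif_pos hx]
        refine ⟨hfS x hx, fun hfT => ?_⟩
        have hxT : x ∈ T := (hBsub hx.1.1).resolve_left hx.1.2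
        have : f x hx = x := hTr hfT hxT (hfc x hx)
        exact hx.1.2 (this ▸ hfS x hx)
      · intro x hx y hy hxy
        simp only [dif_pos hx, dif_pos hy] at hxy
        have : c x = c y := by rw [← hfc x hx, ← hfc y hy, hxy]
        exact hTr ((hBsub hx.1.1).resolve_left hx.1.2) ((hBsub hy.1.1).resolve_left hy.1.2) this
    calc (T \ (B \ D)).ncard ≤ ((T \ B) ∪ D).ncard := ncard_le_ncard hsub (hTBf.union hDf)
      _ ≤ (T \ B).ncard + D.ncard := ncard_union_le _ _
      _ ≤ (S \ T).ncard + (S \ T).ncard := Nat.add_le_add (h1.trans h1') h2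
      _ = 2 * (S \ T).ncard := (two_mul _).symm
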